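/- Let W be a nonnegative square real matrix all of whose row sums equal 1 (a row-stochastic matrix), and suppose additionally that every diagonal entry of W is strictly positive. Then the matrix powers W^t converge entrywise as t → ∞; in particular, for every vector x, the power iteration W^t x converges deterministically. -/

import Mathlib

open scoped Matrix
open Filter Matrix Module

set_option linter.unusedSectionVars false
set_option maxHeartbeats 1000000

section stmt9aux
variable {n : Type*} [Fintype n] [DecidableEq n]

lemma stmt9_coef (j : ℕ) {r : ℝ} (h0 : 0 ≤ r) (hr : r < 1) :
    Tendsto (fun t : ℕ => (t.choose j : ℝ) * r ^ (t - j)) atTop (nhds 0) := by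
  rw [← tendsto_add_atTop_iff_nat j]
  simp only [Nat.add_sub_cancel]
  exact (summable_choose_mul_geometric_of_norm_lt_one (R := ℝ) j
    (by rwa [Real.norm_eq_abs, abs_of_nonneg h0])).tendsto_atTop_zero

lemma stmt9_contr (W : Matrix n n ℝ) (hW : ∀ i j, 0 ≤ W i j) (hrow : ∀ i, ∑ j, W i j = 1)
    (v : n → ℂ) : ‖(W.map (Complex.ofReal)) *ᵥ v‖ ≤ ‖v‖ := by
  rw [pi_norm_le_iff_of_nonneg (norm_nonneg v)]
  intro i
  calc ‖∑ j, (W i j : ℂ) * v j‖ ≤ ∑ j, ‖(W i j : ℂ) * v j‖ := norm_sum_le _ _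
    _ = ∑ j, W i j * ‖v j‖ := by
        simp [Complex.norm_real, abs_of_nonneg (hW i _)]
    _ ≤ ∑ j, W i j * ‖v‖ := by
        exact Finset.sum_le_sum fun j _ => by
          have := norm_le_pi_norm v j
          nlinarith [hW i j]
    _ = ‖v‖ := by rw [← Finset.sum_mul, hrow, one_mul]

lemma stmt9_eig (W : Matrix n n ℝ) (hW : ∀ i j, 0 ≤ W i j) (hrow : ∀ i, ∑ j, W i j = 1)
    (hdiag : ∀ i, 0 < W i i) (μ : ℂ) (v : n → ℂ) (hv : v ≠ 0)
    (heq : (W.map (Complex.ofReal)) *ᵥ v = μ • v) : μ = 1 ∨ ‖μ‖ < 1 := by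
  have hne : (Finset.univ : Finset n).Nonempty := by
    by_contra h
    exact hv (funext fun i => absurd (Finset.mem_univ i) (fun hh => h ⟨i, hh⟩))
  obtain ⟨k, -, hk⟩ := Finset.exists_max_image Finset.univ (fun j => ‖v j‖) hne
  have hk' : ∀ j, ‖v j‖ ≤ ‖v k‖ := fun j => hk j (Finset.mem_univ j)
  have hvk : 0 < ‖v k‖ := by
    rcases (norm_nonneg (v k)).lt_or_eq with h | h
    · exact h
    · exfalso; apply hv; funext j
      have := hk' j; rw [← h] at this
      simpa using le_antisymm this (norm_nonneg _)
  have hrowk : ∑ j, (W k j : ℂ) * v j = μ * v k := by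
    have := congrFun heq k
    simpa [Matrix.mulVec, dotProduct, Pi.smul_apply, smul_eq_mul] using this
  have hsplit : (μ - (W k k : ℂ)) * v k = ∑ j ∈ Finset.univ.erase k, (W k j : ℂ) * v j := by
    rw [← Finset.add_sum_erase _ _ (Finset.mem_univ k)] at hrowk
    linear_combination -hrowk
  set d : ℝ := W k k with hd
  have hd0 : 0 < d := hdiag k
  have hd1 : d ≤ 1 := by
    rw [← hrow k, ← Finset.add_sum_erase _ _ (Finset.mem_univ k)]
    have : 0 ≤ ∑ j ∈ Finset.univ.erase k, W k j :=
      Finset.sum_nonneg fun j _ => hW k j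
    linarith
  have hbound : ‖μ - (d : ℂ)‖ * ‖v k‖ ≤ (1 - d) * ‖v k‖ := by
    calc ‖μ - (d : ℂ)‖ * ‖v k‖ = ‖(μ - (d : ℂ)) * v k‖ := (norm_mul _ _).symm
      _ = ‖∑ j ∈ Finset.univ.erase k, (W k j : ℂ) * v j‖ := by rw [hsplit]
      _ ≤ ∑ j ∈ Finset.univ.erase k, ‖(W k j : ℂ) * v j‖ := norm_sum_le _ _
      _ ≤ ∑ j ∈ Finset.univ.erase k, W k j * ‖v k‖ := by
          refine Finset.sum_le_sum fun j _ => ?_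
          rw [norm_mul, Complex.norm_real, Real.norm_eq_abs, abs_of_nonneg (hW k j)]
          nlinarith [hk' j, hW k j]
      _ = (1 - d) * ‖v k‖ := by
          rw [← Finset.sum_mul]
          congr 1
          have := hrow k
          rw [← Finset.add_sum_erase _ _ (Finset.mem_univ k)] at this
          linarith
  have hger : ‖μ - (d : ℂ)‖ ≤ 1 - d := le_of_mul_le_mul_right (by simpa [mul_comm] using hbound) hvk
  by_cases hmu : μ = 1
  · exact Or.inl hmu
  right
  have h2 : ‖μ - (d : ℂ)‖ ^ 2 ≤ (1 - d) ^ 2 := by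
    have h1d : (0:ℝ) ≤ 1 - d := by linarith
    nlinarith [norm_nonneg (μ - (d:ℂ))]
  have hre : (μ - (d : ℂ)).re = μ.re - d := by simp
  have him : (μ - (d : ℂ)).im = μ.im := by simp
  have hns : ‖μ - (d : ℂ)‖ ^ 2 = (μ.re - d)^2 + μ.im^2 := by
    rw [Complex.sq_norm, Complex.normSq_apply, hre, him]; ring
  have hns2 : ‖μ‖ ^ 2 = μ.re^2 + μ.im^2 := by
    rw [Complex.sq_norm, Complex.normSq_apply]; ring
  have key : μ.re^2 + μ.im^2 ≤ 1 - 2*d*(1 - μ.re) := by nlinarith [hns ▸ h2]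
  have hre1 : μ.re < 1 := by
    rcases lt_or_ge μ.re 1 with h | h
    · exact h
    · exfalso
      have him0 : μ.im ^ 2 ≤ 2*(1-μ.re)*(1-d) := by nlinarith
      have h1 : μ.im = 0 := by nlinarith [sq_nonneg μ.im]
      have h2' : μ.re = 1 := by nlinarith [sq_nonneg (μ.re - 1)]
      exact hmu (Complex.ext h2' h1)
  have : ‖μ‖ ^ 2 < 1 := by rw [hns2]; nlinarith
  nlinarith [norm_nonneg μ]

noncomputable def fW (W : Matrix n n ℝ) : Module.End ℂ (n → ℂ) :=
  (W.map (Complex.ofReal)).mulVecLin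

lemma fW_pow_contr (W : Matrix n n ℝ) (hW : ∀ i j, 0 ≤ W i j)
    (hrow : ∀ i, ∑ j, W i j = 1) :
    ∀ (t : ℕ) (v : n → ℂ), ‖((fW W) ^ t) v‖ ≤ ‖v‖ := by
  intro t
  induction t with
  | zero => simp
  | succ t ih =>
    intro v
    rw [pow_succ, Module.End.mul_apply]
    exact (ih _).trans (stmt9_contr W hW hrow v)

lemma fW_fix (W : Matrix n n ℝ) (hW : ∀ i j, 0 ≤ W i j) (hrow : ∀ i, ∑ j, W i j = 1) :
    ∀ (k : ℕ) (v : n → ℂ), (((fW W) - 1) ^ k) v = 0 → fW W v = v := by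
  intro k
  induction k with
  | zero => intro v hv; simp at hv; simp [hv]
  | succ k ih =>
    intro v hv
    set u : n → ℂ := (fW W - 1) v with hu
    have hku : (((fW W) - 1) ^ k) u = 0 := by
      rw [hu, ← Module.End.mul_apply, ← pow_succ]; exact hv
    rcases Nat.eq_zero_or_pos k with hk0 | hkpos
    · subst hk0; simp at hku
      have : fW W v - v = 0 := by simpa [hu, LinearMap.sub_apply] using hku
      linear_combination (norm := module) this
    · have hfu : fW W u = u := ih u hku
      have hfv : fW W v = v + u := by
        have : u = fW W v - v := by simp [hu, LinearMap.sub_apply]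
        rw [this]; module
      have hiter : ∀ t : ℕ, ((fW W) ^ t) v = v + (t : ℂ) • u := by
        intro t
        induction t with
        | zero => simp
        | succ t iht =>
          rw [pow_succ', Module.End.mul_apply, iht, map_add, LinearMap.map_smul, hfv, hfu]
          push_cast
          module
      have hu0 : u = 0 := by
        by_contra hu0
        have hnu : 0 < ‖u‖ := norm_pos_iff.mpr hu0
        obtain ⟨t, ht⟩ := exists_nat_gt ((2 * ‖v‖) / ‖u‖)
        have h1 : ‖((fW W) ^ t) v‖ ≤ ‖v‖ := fW_pow_contr W hW hrow t v
        rw [hiter t] at h1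
        have h3 : ‖(t : ℂ) • u‖ = t * ‖u‖ := by
          rw [norm_smul]; simp
        have h4 : (t : ℝ) * ‖u‖ ≤ 2 * ‖v‖ := by
          have h5 : ‖(t:ℂ) • u‖ ≤ ‖v + (t:ℂ) • u‖ + ‖v‖ := by
            simpa [add_sub_cancel_left] using norm_sub_le (v + (t:ℂ) • u) v
          rw [h3] at h5
          linarith
        rw [div_lt_iff₀ hnu] at ht
        linarith
      rw [hfv, hu0, add_zero]

lemma fW_main (W : Matrix n n ℝ) (hW : ∀ i j, 0 ≤ W i j) (hrow : ∀ i, ∑ j, W i j = 1)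
    (hdiag : ∀ i, 0 < W i i) : ∀ v : n → ℂ, ∃ y : n → ℂ,
    Tendsto (fun t : ℕ => ((fW W) ^ t) v) atTop (nhds y) := by
  set S : Submodule ℂ (n → ℂ) :=
    { carrier := {v | ∃ y : n → ℂ, Tendsto (fun t : ℕ => ((fW W) ^ t) v) atTop (nhds y)}
      add_mem' := by
        rintro a b ⟨ya, hya⟩ ⟨yb, hyb⟩
        exact ⟨ya + yb, by simpa [map_add] using hya.add hyb⟩
      zero_mem' := ⟨0, by simpa [map_zero] using (tendsto_const_nhds :
        Tendsto (fun _ : ℕ => (0 : n → ℂ)) atTop (nhds 0))⟩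
      smul_mem' := by
        rintro c a ⟨ya, hya⟩
        exact ⟨c • ya, by simpa [LinearMap.map_smul] using hya.const_smul c⟩ } with hS
  have hle : ∀ μ : ℂ, (fW W).maxGenEigenspace μ ≤ S := by
    intro μ v hvmem
    by_cases hv0 : v = 0
    · subst hv0; exact S.zero_mem
    obtain ⟨k, hk⟩ := ((fW W).mem_maxGenEigenspace μ v).mp hvmem
    have hne : (fW W).HasUnifEigenvalue μ ⊤ :=
      fun hbot => hv0 (by rw [← Submodule.mem_bot (R := ℂ), ← hbot]; exact hvmem)
    have h1 : (fW W).HasUnifEigenvalue μ 1 :=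
      Module.End.HasUnifEigenvalue.lt (by norm_num) hne
    obtain ⟨w, hw⟩ := h1.exists_hasUnifEigenvector
    have hwe : (W.map (Complex.ofReal)) *ᵥ w = μ • w := hw.apply_eq_smul
    rcases stmt9_eig W hW hrow hdiag μ w hw.2 hwe with h1' | hlt
    · subst h1'
      have hfv : fW W v = v := fW_fix W hW hrow k v (by simpa using hk)
      have hconst : ∀ t : ℕ, ((fW W) ^ t) v = v := by
        intro t
        induction t with
        | zero => simp
        | succ t iht => rw [pow_succ, Module.End.mul_apply, hfv, iht]
      exact ⟨v, by simp only [hconst]; exact tendsto_const_nhds⟩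
    · set N : Module.End ℂ (n → ℂ) := fW W - μ • 1 with hN
      have hNk : ∀ m, k ≤ m → (N ^ m) v = 0 := by
        intro m hm
        have : N ^ m = N ^ (m - k) * N ^ k := by
          rw [← pow_add]; congr 1; omega
        rw [this, Module.End.mul_apply, hk, map_zero]
      have hcomm : Commute N (μ • (1 : Module.End ℂ (n → ℂ))) :=
        (Commute.one_right N).smul_right μ
      have hform : ∀ t : ℕ, ((fW W) ^ t) v
          = ∑ j ∈ Finset.range (t + 1), ((t.choose j : ℂ) * μ ^ (t - j)) • ((N ^ j) v) := by
        intro t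
        have hfe : fW W = N + μ • 1 := by rw [hN]; abel
        rw [hfe, hcomm.add_pow, LinearMap.coe_sum, Finset.sum_apply]
        refine Finset.sum_congr rfl fun j hj => ?_
        rw [smul_pow, one_pow]
        simp only [Module.End.mul_apply, Module.End.natCast_apply, LinearMap.smul_apply,
          Module.End.one_apply, LinearMap.map_smul, map_nsmul]
        rw [← Nat.cast_smul_eq_nsmul (R := ℂ), smul_smul]
      have hform' : ∀ t : ℕ, k ≤ t → ((fW W) ^ t) v
          = ∑ j ∈ Finset.range k, ((t.choose j : ℂ) * μ ^ (t - j)) • ((N ^ j) v) := by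
        intro t ht
        rw [hform t]
        refine (Finset.sum_subset (Finset.range_subset_range.mpr (by omega)) ?_).symm
        intro j hj hj'
        rw [hNk j (by simp only [Finset.mem_range, not_lt] at hj'; omega), smul_zero]
      have hlim : Tendsto (fun t : ℕ =>
          ∑ j ∈ Finset.range k, ((t.choose j : ℂ) * μ ^ (t - j)) • ((N ^ j) v))
          atTop (nhds 0) := by
        have h0 : (0 : n → ℂ) = ∑ j ∈ Finset.range k, (0 : n → ℂ) := by simp
        rw [h0]
        refine tendsto_finset_sum _ fun j hj => ?_
        have hc : Tendsto (fun t : ℕ => (t.choose j : ℂ) * μ ^ (t - j)) atTop (nhds 0) := by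
          refine squeeze_zero_norm (fun t => ?_) (stmt9_coef j (norm_nonneg μ) hlt)
          rw [norm_mul, norm_pow]
          simp
        simpa using hc.smul_const ((N ^ j) v)
      exact ⟨0, hlim.congr' (((eventually_ge_atTop k).mono fun t ht => (hform' t ht).symm))⟩
  intro v
  have := Module.End.iSup_maxGenEigenspace_eq_top (fW W)
  exact (iSup_le hle) (this ▸ Submodule.mem_top (R := ℂ) (x := v))

lemma fW_pow_map (W : Matrix n n ℝ) :
    ∀ t : ℕ, (W.map (Complex.ofReal)) ^ t = (W ^ t).map (Complex.ofReal) := by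
  intro t
  induction t with
  | zero =>
    ext i j
    simp [Matrix.map_apply, Matrix.one_apply]
    split <;> simp_all
  | succ t ih =>
    ext i j
    rw [pow_succ, pow_succ]
    simp only [Matrix.mul_apply, ih, Matrix.map_apply]
    push_cast
    rfl

lemma fW_pow_apply (W : Matrix n n ℝ) (t : ℕ) (v : n → ℂ) :
    ((fW W) ^ t) v = ((W ^ t).map (Complex.ofReal)) *ᵥ v := by
  rw [← fW_pow_map]
  induction t with
  | zero => simp
  | succ t ih =>
    rw [pow_succ', Module.End.mul_apply, ih, pow_succ']
    show (W.map (Complex.ofReal)) *ᵥ _ = _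
    rw [← Matrix.mulVec_mulVec]

lemma stmt9_vec (W : Matrix n n ℝ) (hW : ∀ i j, 0 ≤ W i j) (hrow : ∀ i, ∑ j, W i j = 1)
    (hdiag : ∀ i, 0 < W i i) (x : n → ℝ) :
    ∃ y : n → ℝ, Tendsto (fun t : ℕ => (W ^ t) *ᵥ x) atTop (nhds y) := by
  obtain ⟨yc, hyc⟩ := fW_main W hW hrow hdiag (fun j => (x j : ℂ))
  refine ⟨fun i => (yc i).re, ?_⟩
  rw [tendsto_pi_nhds]
  intro i
  have h1 : Tendsto (fun t : ℕ => (((fW W) ^ t) (fun j => (x j : ℂ))) i) atTop (nhds (yc i)) :=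
    (tendsto_pi_nhds.mp hyc) i
  have h2 : Tendsto (fun t : ℕ => ((((fW W) ^ t) (fun j => (x j : ℂ))) i).re)
      atTop (nhds ((yc i).re)) := (Complex.continuous_re.tendsto _).comp h1
  refine h2.congr fun t => ?_
  rw [fW_pow_apply]
  show ((((W ^ t).map (Complex.ofReal)) *ᵥ (fun j => (x j : ℂ))) i).re = ((W ^ t) *ᵥ x) i
  simp only [Matrix.mulVec, dotProduct, Matrix.map_apply]
  push_cast
  rw [Complex.re_sum]
  simp

end stmt9aux

/-- If `W` is a row-stochastic matrix (nonnegative, every row sums to `1`) with strictly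
positive diagonal entries, then the matrix powers `W^t` converge entrywise as `t → ∞`;
in particular, for every vector `x`, the power iteration `W^t x` converges
(deterministically, to a limit depending only on `W` and `x`). -/
theorem stmt_9 {n : Type*} [Fintype n] [DecidableEq n]
    (W : Matrix n n ℝ) (hW : ∀ i j, 0 ≤ W i j) (hrow : ∀ i, ∑ j, W i j = 1)
    (hdiag : ∀ i, 0 < W i i) :
    (∃ L : Matrix n n ℝ, Filter.Tendsto (fun t : ℕ => W ^ t) Filter.atTop (nhds L)) ∧
      ∀ x : n → ℝ, ∃ y : n → ℝ,
        Filter.Tendsto (fun t : ℕ => (W ^ t) *ᵥ x) Filter.atTop (nhds y) := by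
  constructor
  · refine ⟨Matrix.of fun i j => Classical.choose (stmt9_vec W hW hrow hdiag (Pi.single j 1)) i, ?_⟩
    refine tendsto_pi_nhds.mpr ?_
    intro i
    rw [tendsto_pi_nhds]
    intro j
    have hspec := Classical.choose_spec (stmt9_vec W hW hrow hdiag (Pi.single j 1))
    have := (tendsto_pi_nhds.mp hspec) i
    refine this.congr fun t => ?_
    rw [Matrix.mulVec_single]
    simp
  · exact stmt9_vec W hW hrow hdiag
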